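/- arXiv:2209.00515 — 5 statements merged into one kernel-verified Lean document; each statement's English description precedes it below -/
import Mathlib

section
/- If F is a probability measure on ℝ with finite first moment and positive mean m, then T(F) = 0 if and only if F is the Dirac measure at m, i.e., f̂(ξ) = e^{-imξ} for all ξ. -/
open MeasureTheory Complex

lemma hasDerivAt_cexp_real (c : ℂ) (ξ : ℝ) :
    HasDerivAt (fun t : ℝ => Complex.exp (c * t)) (c * Complex.exp (c * ξ)) ξ := by
  have h : HasDerivAt (fun z : ℂ => Complex.exp (c * z)) (c * Complex.exp (c * (ξ:ℂ))) (ξ:ℂ) := by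
    simpa [mul_comm, Function.comp_def] using (Complex.hasDerivAt_exp ((c : ℂ) * ξ)).comp (ξ:ℂ)
      ((hasDerivAt_id (ξ:ℂ)).const_mul c)
  exact h.comp_ofReal

lemma norm_cexp_neg_I_mul (ξ x : ℝ) : ‖Complex.exp (-(Complex.I * ξ * x))‖ = 1 := by
  rw [Complex.norm_exp]
  simp

/-- Fourier transform `f̂(ξ) = ∫ e^{-iξx} dF(x)` of a measure on `ℝ`. -/
noncomputable def ft (μ : Measure ℝ) (ξ : ℝ) : ℂ :=
  ∫ x, Complex.exp (-(Complex.I * ξ * x)) ∂μ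

/-- Derivative of the Fourier transform: `f̂'(ξ) = -i ∫ x e^{-iξx} dF(x)`. -/
noncomputable def ft' (μ : Measure ℝ) (ξ : ℝ) : ℂ :=
  ∫ x, -(Complex.I * x) * Complex.exp (-(Complex.I * ξ * x)) ∂μ

/-- The Fourier-based inequality index `T(F) = (1/2) sup_ξ |f̂(ξ) - f̂'(ξ)/f̂'(0)|`. -/
noncomputable def Tindex (μ : Measure ℝ) : ℝ :=
  (1 / 2) * ⨆ ξ : ℝ, ‖ft μ ξ - ft' μ ξ / ft' μ 0‖

lemma ft_integrand_integrable (μ : Measure ℝ) [IsProbabilityMeasure μ] (ξ : ℝ) :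
    Integrable (fun x : ℝ => Complex.exp (-(Complex.I * ξ * x))) μ := by
  refine (integrable_const (1:ℝ)).mono' ?_ ?_
  · exact (Complex.continuous_exp.comp (by continuity)).aestronglyMeasurable
  · filter_upwards with x
    rw [norm_cexp_neg_I_mul]

lemma ft'_integrand_integrable (μ : Measure ℝ) (hint : Integrable (fun x : ℝ => x) μ) (ξ : ℝ) :
    Integrable (fun x : ℝ => -(Complex.I * x) * Complex.exp (-(Complex.I * ξ * x))) μ := by
  refine hint.abs.mono' ?_ ?_
  · exact ((((continuous_const.mul Complex.continuous_ofReal)).neg).mul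
      (Complex.continuous_exp.comp (by continuity))).aestronglyMeasurable
  · filter_upwards with x
    rw [norm_mul, norm_cexp_neg_I_mul, mul_one, norm_neg]
    simp

lemma ft_zero (μ : Measure ℝ) [IsProbabilityMeasure μ] : ft μ 0 = 1 := by
  simp [ft]

lemma ft'_zero (μ : Measure ℝ) [IsProbabilityMeasure μ] (hint : Integrable (fun x : ℝ => x) μ) :
    ft' μ 0 = -(Complex.I * (∫ x, x ∂μ)) := by
  have h : ∀ x : ℝ, -(Complex.I * ((0:ℝ):ℂ) * x) = 0 := by intro x; simp
  rw [ft']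
  simp_rw [h, Complex.exp_zero, mul_one]
  have h2 : ∀ x : ℝ, -(Complex.I * (x:ℂ)) = (-Complex.I) * x := by intro x; ring
  simp_rw [h2]
  rw [MeasureTheory.integral_const_mul]
  congr 1
  exact (integral_ofReal (𝕜 := ℂ) (μ := μ) (f := fun x : ℝ => x)).symm.symm

lemma ft_hasDerivAt (μ : Measure ℝ) [IsProbabilityMeasure μ]
    (hint : Integrable (fun x : ℝ => x) μ) (ξ : ℝ) :
    HasDerivAt (ft μ) (ft' μ ξ) ξ := by
  have key := hasDerivAt_integral_of_dominated_loc_of_deriv_le (μ := μ)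
    (F := fun (t : ℝ) (x : ℝ) => Complex.exp (-(Complex.I * t * x)))
    (F' := fun (t : ℝ) (x : ℝ) => -(Complex.I * x) * Complex.exp (-(Complex.I * t * x)))
    (x₀ := ξ) (bound := fun x => |x|) (s := Metric.ball ξ 1) (Metric.ball_mem_nhds ξ one_pos)
    (Filter.Eventually.of_forall fun t => (ft_integrand_integrable μ t).1)
    (ft_integrand_integrable μ ξ)
    (ft'_integrand_integrable μ hint ξ).1
    (Filter.Eventually.of_forall fun x t _ => ?_)
    hint.abs
    (Filter.Eventually.of_forall fun x t _ => ?_)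
  · exact key.2
  · rw [norm_mul, norm_cexp_neg_I_mul, mul_one, norm_neg]
    simp
  · have h := hasDerivAt_cexp_real (-(Complex.I * x)) t
    have e : ∀ s : ℝ, Complex.exp (-(Complex.I * s * x)) = Complex.exp (-(Complex.I * x) * s) :=
      fun s => by congr 1; ring
    simpa only [e] using h

lemma ft_norm_le_one (μ : Measure ℝ) [IsProbabilityMeasure μ] (ξ : ℝ) : ‖ft μ ξ‖ ≤ 1 := by
  calc ‖ft μ ξ‖ ≤ ∫ x, ‖Complex.exp (-(Complex.I * ξ * x))‖ ∂μ := norm_integral_le_integral_norm _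
  _ = 1 := by simp_rw [norm_cexp_neg_I_mul]; simp

lemma ft'_norm_le (μ : Measure ℝ) [IsProbabilityMeasure μ] (ξ : ℝ) :
    ‖ft' μ ξ‖ ≤ ∫ x, |x| ∂μ := by
  calc ‖ft' μ ξ‖ ≤ ∫ x, ‖-(Complex.I * x) * Complex.exp (-(Complex.I * ξ * x))‖ ∂μ :=
        norm_integral_le_integral_norm _
  _ = ∫ x, |x| ∂μ := by
      congr 1; funext x
      rw [norm_mul, norm_cexp_neg_I_mul, mul_one, norm_neg]
      simp

/-- If `ft' μ ξ = c * ft μ ξ` for all ξ then `ft μ ξ = exp (c ξ)`. -/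
lemma ft_eq_exp (μ : Measure ℝ) [IsProbabilityMeasure μ]
    (hint : Integrable (fun x : ℝ => x) μ) (c : ℂ)
    (h : ∀ ξ : ℝ, ft' μ ξ = c * ft μ ξ) (ξ : ℝ) :
    ft μ ξ = Complex.exp (c * ξ) := by
  set g : ℝ → ℂ := fun t => ft μ t * Complex.exp (-c * t) with hg
  have hderiv : ∀ t : ℝ, HasDerivAt g 0 t := by
    intro t
    have h1 := ft_hasDerivAt μ hint t
    have h2 := hasDerivAt_cexp_real (-c) t
    have := h1.mul h2
    rw [h t] at this
    have e : c * ft μ t * Complex.exp (-c * t) + ft μ t * (-c * Complex.exp (-c * t)) = 0 := by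
      ring
    rw [e] at this
    exact this
  have hconst : ∀ t : ℝ, g t = g 0 := by
    intro t
    exact is_const_of_deriv_eq_zero (fun s => (hderiv s).differentiableAt)
      (fun s => (hderiv s).deriv) t 0
  have h0 : g 0 = 1 := by simp [hg, ft_zero]
  have ht := hconst ξ
  rw [h0, hg] at ht
  simp only at ht
  have hne : Complex.exp (-c * ξ) ≠ 0 := Complex.exp_ne_zero _
  have : ft μ ξ * Complex.exp (-c * ξ) * Complex.exp (c * ξ) = 1 * Complex.exp (c * ξ) := by
    rw [ht]
  rwa [mul_assoc, ← Complex.exp_add, neg_mul, neg_add_cancel, Complex.exp_zero, mul_one,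
    one_mul] at this

lemma cos_ae_one (μ : Measure ℝ) [IsProbabilityMeasure μ] (m : ℝ)
    (h : ∀ ξ : ℝ, ft μ ξ = Complex.exp (-(Complex.I * m) * ξ)) (ξ : ℝ) :
    ∀ᵐ x ∂μ, Real.cos (ξ * (m - x)) = 1 := by
  -- ∫ exp((ξ(m-x)) I) dμ = 1
  have key : ∫ x, Complex.exp ((ξ * (m - x) : ℝ) * Complex.I) ∂μ = 1 := by
    have h1 : ∀ x : ℝ, Complex.exp ((ξ * (m - x) : ℝ) * Complex.I)
        = Complex.exp (-(Complex.I * ξ * x)) * Complex.exp (Complex.I * ξ * m) := by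
      intro x
      rw [← Complex.exp_add]
      congr 1
      push_cast
      ring
    simp_rw [h1]
    rw [MeasureTheory.integral_mul_const]
    have h2 := h ξ
    rw [ft] at h2
    rw [h2, ← Complex.exp_add]
    have : -(Complex.I * m) * ξ + Complex.I * ξ * m = 0 := by ring
    rw [this, Complex.exp_zero]
  -- real parts
  have hint1 : Integrable (fun x : ℝ => Complex.exp ((ξ * (m - x) : ℝ) * Complex.I)) μ := by
    refine (integrable_const (1:ℝ)).mono' ?_ ?_
    · exact (Complex.continuous_exp.comp (by continuity)).aestronglyMeasurable
    · filter_upwards with x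
      rw [Complex.norm_exp_ofReal_mul_I]
  have hre : ∫ x, Real.cos (ξ * (m - x)) ∂μ = 1 := by
    have h3 := integral_re hint1
    have h4 : ∀ x : ℝ, (Complex.exp ((ξ * (m - x) : ℝ) * Complex.I)).re
        = Real.cos (ξ * (m - x)) := fun x => Complex.exp_ofReal_mul_I_re _
    simp only [RCLike.re_to_complex] at h3
    rw [integral_congr_ae (Filter.Eventually.of_forall h4)] at h3
    rw [h3, key]
    simp
  have hcosint : Integrable (fun x : ℝ => Real.cos (ξ * (m - x))) μ := by
    refine (integrable_const (1:ℝ)).mono' ?_ ?_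
    · exact (Real.continuous_cos.comp (by continuity)).aestronglyMeasurable
    · filter_upwards with x
      rw [Real.norm_eq_abs]
      exact Real.abs_cos_le_one _
  have hzero : ∫ x, (1 - Real.cos (ξ * (m - x))) ∂μ = 0 := by
    rw [integral_sub (integrable_const 1) hcosint, hre]
    simp
  have hnonneg : 0 ≤ fun x : ℝ => 1 - Real.cos (ξ * (m - x)) := by
    intro x
    simp only [Pi.zero_apply, sub_nonneg]
    exact Real.cos_le_one _
  have := (integral_eq_zero_iff_of_nonneg hnonneg
    ((integrable_const 1).sub hcosint)).mp hzero
  filter_upwards [this] with x hx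
  have : (1 : ℝ) - Real.cos (ξ * (m - x)) = 0 := hx
  linarith

lemma eq_dirac_of_ft (μ : Measure ℝ) [IsProbabilityMeasure μ] (m : ℝ)
    (h : ∀ ξ : ℝ, ft μ ξ = Complex.exp (-(Complex.I * m) * ξ)) :
    μ = Measure.dirac m := by
  have hall : ∀ᵐ x ∂μ, ∀ n : ℕ, Real.cos (((n : ℝ) + 1)⁻¹ * (m - x)) = 1 :=
    ae_all_iff.mpr fun n => cos_ae_one μ m h _
  have hae : ∀ᵐ x ∂μ, x = m := by
    filter_upwards [hall] with x hx
    by_contra hne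
    have hd : m - x ≠ 0 := fun hc => hne (by linarith [sub_eq_zero.mp hc])
    obtain ⟨n, hn⟩ := exists_nat_gt (|m - x| / (2 * Real.pi))
    obtain ⟨k, hk⟩ := (Real.cos_eq_one_iff _).mp (hx n)
    have hk0 : (k : ℝ) ≠ 0 := by
      intro hc
      rw [hc, zero_mul] at hk
      exact hd (by
        have := hk.symm
        field_simp at this
        simpa using this)
    have h1 : (1:ℝ) ≤ |(k:ℝ)| := by
      have : k ≠ 0 := fun hc => hk0 (by simp [hc])
      exact_mod_cast Int.one_le_abs (by omega)
    have hpi : (0:ℝ) < 2 * Real.pi := by positivity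
    have habs : |m - x| = |(k:ℝ)| * (2 * Real.pi) * ((n:ℝ) + 1) := by
      have : m - x = (k:ℝ) * (2 * Real.pi) * ((n:ℝ) + 1) := by
        have hne2 : ((n:ℝ) + 1) ≠ 0 := by positivity
        field_simp at hk ⊢
        linarith [hk]
      rw [this, abs_mul, abs_mul, abs_of_pos hpi, abs_of_pos (by positivity : (0:ℝ) < (n:ℝ)+1)]
    have hge : 2 * Real.pi * ((n:ℝ) + 1) ≤ |m - x| := by
      rw [habs]
      have h5 := mul_le_mul_of_nonneg_right h1
        (le_of_lt (by positivity : (0:ℝ) < 2 * Real.pi * ((n:ℝ) + 1)))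
      nlinarith
    have hlt : |m - x| < 2 * Real.pi * ((n:ℝ) + 1) := by
      rw [div_lt_iff₀ hpi] at hn
      nlinarith
    linarith
  have hcompl : μ {m}ᶜ = 0 := by
    have h0 : μ {x : ℝ | ¬ x = m} = 0 := ae_iff.mp hae
    have he : {x : ℝ | ¬ x = m} = ({m}ᶜ : Set ℝ) := by ext x; simp
    rwa [he] at h0
  ext s hs
  rw [Measure.dirac_apply' m hs]
  by_cases hm : m ∈ s
  · have h1 : μ sᶜ = 0 := measure_mono_null (fun x hx => by
      simp only [Set.mem_compl_iff, Set.mem_singleton_iff]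
      intro hc; exact hx (hc ▸ hm)) hcompl
    have h2 := measure_add_measure_compl hs (μ := μ)
    rw [h1, add_zero] at h2
    rw [h2]
    simp [hm]
  · have h1 : μ s = 0 := measure_mono_null (fun x hx => by
      simp only [Set.mem_compl_iff, Set.mem_singleton_iff]
      intro hc; exact hm (hc ▸ hx)) hcompl
    rw [h1]
    simp [hm]

theorem stmt_1 (μ : Measure ℝ) [IsProbabilityMeasure μ]
    (hint : Integrable (fun x : ℝ => x) μ)
    (m : ℝ) (hm : m = ∫ x, x ∂μ) (hmpos : 0 < m) :
    Tindex μ = 0 ↔ μ = Measure.dirac m := by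
  have hD : ft' μ 0 = -(Complex.I * m) := by rw [ft'_zero μ hint, ← hm]
  have hmne : (m : ℂ) ≠ 0 := by exact_mod_cast hmpos.ne'
  have hDne : ft' μ 0 ≠ 0 := by
    rw [hD]
    simp [Complex.I_ne_zero, hmne]
  constructor
  · intro hT
    -- sup is zero
    set g : ℝ → ℝ := fun ξ => ‖ft μ ξ - ft' μ ξ / ft' μ 0‖ with hg
    have hbdd : BddAbove (Set.range g) := by
      refine ⟨1 + (∫ x, |x| ∂μ) / m, ?_⟩
      rintro _ ⟨ξ, rfl⟩
      have h1 : ‖ft' μ ξ / ft' μ 0‖ = ‖ft' μ ξ‖ / m := by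
        rw [norm_div, hD]
        congr 1
        simp [abs_of_pos hmpos]
      calc g ξ ≤ ‖ft μ ξ‖ + ‖ft' μ ξ / ft' μ 0‖ := norm_sub_le _ _
        _ ≤ 1 + (∫ x, |x| ∂μ) / m := by
            refine add_le_add (ft_norm_le_one μ ξ) ?_
            rw [h1]
            exact div_le_div_of_nonneg_right (ft'_norm_le μ ξ) hmpos.le
    have hsup : (⨆ ξ : ℝ, g ξ) = 0 := by
      have : (1/2 : ℝ) * (⨆ ξ : ℝ, g ξ) = 0 := hT
      linarith [this]
    have hzero : ∀ ξ : ℝ, g ξ = 0 := by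
      intro ξ
      have hle : g ξ ≤ 0 := hsup ▸ le_ciSup hbdd ξ
      exact le_antisymm hle (norm_nonneg _)
    have hode : ∀ ξ : ℝ, ft' μ ξ = -(Complex.I * m) * ft μ ξ := by
      intro ξ
      have h0 : ft μ ξ - ft' μ ξ / ft' μ 0 = 0 := norm_eq_zero.mp (hzero ξ)
      have h1 : ft μ ξ = ft' μ ξ / ft' μ 0 := by linear_combination h0
      rw [← hD]
      rw [h1]
      field_simp
    have hft := ft_eq_exp μ hint (-(Complex.I * m)) hode
    exact eq_dirac_of_ft μ m hft
  · intro hμ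
    subst hμ
    have hft : ∀ ξ : ℝ, ft (Measure.dirac m) ξ = Complex.exp (-(Complex.I * ξ * m)) := by
      intro ξ; rw [ft, integral_dirac]
    have hft' : ∀ ξ : ℝ, ft' (Measure.dirac m) ξ
        = -(Complex.I * m) * Complex.exp (-(Complex.I * ξ * m)) := by
      intro ξ; rw [ft', integral_dirac]
    have hz : ∀ ξ : ℝ, ‖ft (Measure.dirac m) ξ
        - ft' (Measure.dirac m) ξ / ft' (Measure.dirac m) 0‖ = 0 := by
      intro ξ
      rw [hft, hft' ξ, hft' 0]
      have h0 : Complex.exp (-(Complex.I * (0:ℝ) * m)) = 1 := by simp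
      rw [h0, mul_one]
      have hne : -(Complex.I * (m:ℂ)) ≠ 0 := by simp [Complex.I_ne_zero, hmne]
      rw [mul_div_cancel_left₀ _ hne, sub_self, norm_zero]
    rw [Tindex]
    rw [iSup_congr hz, ciSup_const, mul_zero]
end

section
/- If F is the Poisson distribution with parameter λ > 0, then T(F) = e^{-2λ} when λ ≤ 1/4, and T(F) = e^{-1/2}/(2√λ) when λ > 1/4. -/
open MeasureTheory Complex

namespace Stmt9Aux

open ProbabilityTheory

lemma key_ineq (t : ℝ) : t ≤ Real.exp ((t^2 - 1)/2) := by
  have h := Real.add_one_le_exp ((t^2 - 1)/2)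
  nlinarith [sq_nonneg (t - 1)]

lemma hasSum_cexp (w : ℂ) : HasSum (fun n : ℕ => w^n / n.factorial) (Complex.exp w) := by
  rw [Complex.exp_eq_exp_ℂ]; exact NormedSpace.expSeries_div_hasSum_exp w

lemma hasSum_rexp (r : ℝ) : HasSum (fun n : ℕ => r^n / n.factorial) (Real.exp r) := by
  rw [Real.exp_eq_exp_ℝ]; exact NormedSpace.expSeries_div_hasSum_exp r

lemma succ_div_fact {K : Type*} [Field K] [CharZero K] (w : K) (n : ℕ) :
    ((n:K)+1) * w^(n+1) / (n+1).factorial = w * (w^n / n.factorial) := by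
  have h1 : ((n.factorial : K)) ≠ 0 := Nat.cast_ne_zero.mpr n.factorial_ne_zero
  have h2 : ((n:K)+1) ≠ 0 := Nat.cast_add_one_ne_zero n
  rw [Nat.factorial_succ]; push_cast; field_simp; ring

lemma hasSum_mul_cexp (w : ℂ) :
    HasSum (fun n : ℕ => (n : ℂ) * w^n / n.factorial) (w * Complex.exp w) := by
  have h := (hasSum_cexp w).mul_left w
  rw [← hasSum_nat_add_iff' 1]
  simp only [Finset.range_one, Finset.sum_singleton, Nat.cast_zero, zero_mul, zero_div, sub_zero]
  convert h using 2 with n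
  · rfl
  push_cast
  exact succ_div_fact w n

lemma hasSum_mul_rexp (r : ℝ) :
    HasSum (fun n : ℕ => (n : ℝ) * r^n / n.factorial) (r * Real.exp r) := by
  have h := (hasSum_rexp r).mul_left r
  rw [← hasSum_nat_add_iff' 1]
  simp only [Finset.range_one, Finset.sum_singleton, Nat.cast_zero, zero_mul, zero_div, sub_zero]
  convert h using 2 with n
  · rfl
  push_cast
  exact succ_div_fact r n

lemma pmf_integrable (p : PMF ℕ) (f : ℕ → ℂ)
    (h : Summable (fun n => (p n).toReal * ‖f n‖)) : Integrable f p.toMeasure := by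
  constructor
  · exact (measurable_from_nat (f := f)).aestronglyMeasurable
  · rw [HasFiniteIntegral, MeasureTheory.lintegral_countable']
    have key : ∀ n : ℕ, ‖f n‖ₑ * p.toMeasure {n}
        = ENNReal.ofReal ((p n).toReal * ‖f n‖) := by
      intro n
      rw [PMF.toMeasure_apply_singleton _ n (MeasurableSet.singleton _),
        ENNReal.ofReal_mul ENNReal.toReal_nonneg, ENNReal.ofReal_toReal (p.apply_ne_top n),
        ofReal_norm, mul_comm]
    simp only [key]
    rw [← ENNReal.ofReal_tsum_of_nonneg
      (fun n => mul_nonneg ENNReal.toReal_nonneg (norm_nonneg _)) h]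
    exact ENNReal.ofReal_lt_top

noncomputable def poissonPMF (l : NNReal) (n : ℕ) : ENNReal := ENNReal.ofReal (poissonPMFReal l n)

lemma toReal_poissonPMF (l : NNReal) (n : ℕ) :
    (poissonPMF l n).toReal = Real.exp (-(l:ℝ)) * (l:ℝ)^n / n.factorial := by
  show (ENNReal.ofReal _).toReal = _
  rw [ENNReal.toReal_ofReal poissonPMFReal_nonneg]
  rfl

lemma norm_cexp_I (ξ : ℝ) (n : ℕ) : ‖Complex.exp (-(Complex.I * ξ * n))‖ = 1 := by
  rw [Complex.norm_exp]
  simp [Complex.mul_re]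

lemma hasSum_ft (l : NNReal) (ξ : ℝ) :
    HasSum (fun n : ℕ => (poissonPMF l n).toReal • Complex.exp (-(Complex.I * ξ * n)))
      (Complex.exp ((l:ℂ) * Complex.exp (-(Complex.I * ξ)) - l)) := by
  set z : ℂ := Complex.exp (-(Complex.I * ξ)) with hzdef
  have h := (hasSum_cexp ((l:ℂ) * z)).mul_left (Complex.exp (-(l:ℂ)))
  have hval : Complex.exp (-(l:ℂ)) * Complex.exp ((l:ℂ)*z) = Complex.exp ((l:ℂ)*z - l) := by
    rw [← Complex.exp_add]; ring_nf
  rw [hval] at h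
  convert h using 2 with n
  · rfl
  have hz : Complex.exp (-(Complex.I * ξ * n)) = z ^ n := by
    rw [hzdef, ← Complex.exp_nat_mul]; ring_nf
  rw [hz, toReal_poissonPMF, Complex.real_smul]
  push_cast [Complex.ofReal_exp]
  rw [mul_pow]
  ring

lemma hasSum_ft' (l : NNReal) (ξ : ℝ) :
    HasSum (fun n : ℕ => (poissonPMF l n).toReal •
        (-(Complex.I * n) * Complex.exp (-(Complex.I * ξ * n))))
      (-Complex.I * l * Complex.exp (-(Complex.I * ξ)) *
        Complex.exp ((l:ℂ) * Complex.exp (-(Complex.I * ξ)) - l)) := by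
  set z : ℂ := Complex.exp (-(Complex.I * ξ)) with hzdef
  have h := (hasSum_mul_cexp ((l:ℂ) * z)).mul_left (-Complex.I * Complex.exp (-(l:ℂ)))
  have hval : -Complex.I * Complex.exp (-(l:ℂ)) * ((l:ℂ)*z * Complex.exp ((l:ℂ)*z))
      = -Complex.I * l * z * Complex.exp ((l:ℂ)*z - l) := by
    rw [Complex.exp_sub, Complex.exp_neg]
    field_simp [Complex.exp_ne_zero]
  rw [hval] at h
  convert h using 2 with n
  · rfl
  have hz : Complex.exp (-(Complex.I * ξ * n)) = z ^ n := by
    rw [hzdef, ← Complex.exp_nat_mul]; ring_nf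
  rw [hz, toReal_poissonPMF, Complex.real_smul]
  push_cast [Complex.ofReal_exp]
  rw [mul_pow]
  ring

lemma ft_eq (l : NNReal) (ξ : ℝ) :
    ft (Measure.map (fun n : ℕ => (n : ℝ)) (poissonMeasure l)) ξ
      = Complex.exp ((l:ℂ) * Complex.exp (-(Complex.I * ξ)) - l) := by
  have hcont : Continuous (fun x : ℝ => Complex.exp (-(Complex.I * ξ * x))) := by
    fun_prop
  rw [ft, integral_map measurable_from_nat.aemeasurable hcont.aestronglyMeasurable]
  simp only [Complex.ofReal_natCast]
  rw [integral_poissonMeasure' ?_, ← (hasSum_ft l ξ).tsum_eq]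
  · simp_rw [toReal_poissonPMF]
  rw [integrable_poissonMeasure_iff]
  apply Summable.congr ((hasSum_rexp l).mul_left (Real.exp (-(l:ℝ)))).summable
  intro n
  rw [norm_cexp_I]
  ring

lemma ft'_eq (l : NNReal) (ξ : ℝ) :
    ft' (Measure.map (fun n : ℕ => (n : ℝ)) (poissonMeasure l)) ξ
      = -Complex.I * l * Complex.exp (-(Complex.I * ξ)) *
        Complex.exp ((l:ℂ) * Complex.exp (-(Complex.I * ξ)) - l) := by
  have hcont : Continuous (fun x : ℝ => -(Complex.I * x) * Complex.exp (-(Complex.I * ξ * x))) := by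
    fun_prop
  rw [ft', integral_map measurable_from_nat.aemeasurable hcont.aestronglyMeasurable]
  simp only [Complex.ofReal_natCast]
  rw [integral_poissonMeasure' ?_, ← (hasSum_ft' l ξ).tsum_eq]
  · simp_rw [toReal_poissonPMF]
  rw [integrable_poissonMeasure_iff]
  apply Summable.congr ((hasSum_mul_rexp l).mul_left (Real.exp (-(l:ℝ)))).summable
  intro n
  rw [norm_mul, norm_cexp_I, norm_neg, norm_mul, Complex.norm_I, Complex.norm_natCast]
  ring

lemma norm_val (l : NNReal) (hl : 0 < l) (ξ : ℝ) :
    ‖ft (Measure.map (fun n : ℕ => (n : ℝ)) (poissonMeasure l)) ξ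
      - ft' (Measure.map (fun n : ℕ => (n : ℝ)) (poissonMeasure l)) ξ
        / ft' (Measure.map (fun n : ℕ => (n : ℝ)) (poissonMeasure l)) 0‖
      = Real.sqrt (2 * (1 - Real.cos ξ)) * Real.exp ((l:ℝ) * (Real.cos ξ - 1)) := by
  have hl0 : ((l:ℝ):ℂ) ≠ 0 := Complex.ofReal_ne_zero.mpr (ne_of_gt hl)
  set z : ℂ := Complex.exp (-(Complex.I * ξ)) with hzdef
  have hzeq : z = Complex.exp ((-ξ : ℝ) * Complex.I) := by
    rw [hzdef]; congr 1; push_cast; ring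
  have hzre : z.re = Real.cos ξ := by
    rw [hzeq, Complex.exp_ofReal_mul_I_re, Real.cos_neg]
  have hzim : z.im = -Real.sin ξ := by
    rw [hzeq, Complex.exp_ofReal_mul_I_im, Real.sin_neg]
  have h0 : ft' (Measure.map (fun n : ℕ => (n : ℝ)) (poissonMeasure l)) 0
      = -Complex.I * l := by
    rw [ft'_eq]
    simp
  have hdiff : ft (Measure.map (fun n : ℕ => (n : ℝ)) (poissonMeasure l)) ξ
      - ft' (Measure.map (fun n : ℕ => (n : ℝ)) (poissonMeasure l)) ξ
        / ft' (Measure.map (fun n : ℕ => (n : ℝ)) (poissonMeasure l)) 0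
      = Complex.exp ((l:ℂ) * z - l) * (1 - z) := by
    rw [h0, ft_eq, ft'_eq, ← hzdef]
    field_simp
  rw [hdiff, norm_mul, Complex.norm_exp]
  have hre : ((l:ℂ) * z - l).re = (l:ℝ) * (Real.cos ξ - 1) := by
    simp [Complex.sub_re, Complex.mul_re, hzre, hzim]
    ring
  have hnz : ‖1 - z‖ = Real.sqrt (2 * (1 - Real.cos ξ)) := by
    rw [Complex.norm_def, Complex.normSq_apply]
    congr 1
    simp [Complex.sub_re, Complex.sub_im, hzre, hzim]
    nlinarith [Real.sin_sq_add_cos_sq ξ]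
  rw [hre, hnz]
  ring

lemma bound_gen (l : ℝ) (hl : 0 < l) (s : ℝ) (hs : 0 ≤ s) :
    Real.sqrt (2*s) * Real.exp (-(l*s)) ≤ Real.exp (-(1/2)) / Real.sqrt l := by
  set t := Real.sqrt (2*l*s) with htdef
  have ht2 : t^2 = 2*l*s := Real.sq_sqrt (by positivity)
  have hts : Real.sqrt l * Real.sqrt (2*s) = t := by
    rw [htdef, ← Real.sqrt_mul hl.le]; congr 1; ring
  rw [le_div_iff₀ (Real.sqrt_pos.mpr hl)]
  calc Real.sqrt (2*s) * Real.exp (-(l*s)) * Real.sqrt l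
      = t * Real.exp (-(l*s)) := by rw [← hts]; ring
    _ ≤ Real.exp ((t^2-1)/2) * Real.exp (-(l*s)) :=
        mul_le_mul_of_nonneg_right (key_ineq t) (Real.exp_pos _).le
    _ = Real.exp (-(1/2)) := by rw [← Real.exp_add]; congr 1; rw [ht2]; ring

lemma bound_small (l : ℝ) (hl : 0 < l) (hl4 : l ≤ 1/4) (s : ℝ) (hs0 : 0 ≤ s) (hs2 : s ≤ 2) :
    Real.sqrt (2*s) * Real.exp (-(l*s)) ≤ 2 * Real.exp (-(2*l)) := by
  set t := Real.sqrt (s/2) with htdef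
  have ht0 : 0 ≤ t := Real.sqrt_nonneg _
  have ht2 : t^2 = s/2 := Real.sq_sqrt (by linarith)
  have ht1 : t ≤ 1 := by
    have := Real.sqrt_le_sqrt (show s/2 ≤ 1 by linarith)
    rwa [Real.sqrt_one] at this
  have h2t : Real.sqrt (2*s) = 2*t := by
    rw [show 2*s = 4*(s/2) by ring, Real.sqrt_mul (by norm_num),
      show Real.sqrt 4 = 2 by rw [show (4:ℝ) = 2^2 by norm_num, Real.sqrt_sq (by norm_num)]]
  have hkey : t ≤ Real.exp (2*l*(t^2-1)) := by
    refine (key_ineq t).trans (Real.exp_le_exp.mpr ?_)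
    nlinarith [sq_nonneg t]
  rw [h2t]
  calc 2*t * Real.exp (-(l*s))
      ≤ 2 * Real.exp (2*l*(t^2-1)) * Real.exp (-(l*s)) := by
        have := mul_le_mul_of_nonneg_right hkey (Real.exp_pos (-(l*s))).le
        nlinarith [Real.exp_pos (-(l*s))]
    _ = 2 * Real.exp (-(2*l)) := by
        rw [mul_assoc, ← Real.exp_add]; congr 2; rw [show s = 2*t^2 by rw [ht2]; ring]; ring

end Stmt9Aux

open Stmt9Aux ProbabilityTheory in
theorem stmt_9 (l : NNReal) (hl : 0 < l) :
    Tindex (Measure.map (fun n : ℕ => (n : ℝ)) (ProbabilityTheory.poissonMeasure l))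
      = if (l : ℝ) ≤ 1 / 4 then Real.exp (-2 * l)
        else Real.exp (-(1 / 2)) / (2 * Real.sqrt l) := by
  have hl' : (0:ℝ) < l := hl
  have hG : ∀ ξ : ℝ,
      ‖ft (Measure.map (fun n : ℕ => (n : ℝ)) (poissonMeasure l)) ξ
        - ft' (Measure.map (fun n : ℕ => (n : ℝ)) (poissonMeasure l)) ξ
          / ft' (Measure.map (fun n : ℕ => (n : ℝ)) (poissonMeasure l)) 0‖
      = Real.sqrt (2 * (1 - Real.cos ξ)) * Real.exp ((l:ℝ) * (Real.cos ξ - 1)) :=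
    norm_val l hl
  have hGform : ∀ ξ : ℝ, Real.sqrt (2 * (1 - Real.cos ξ)) * Real.exp ((l:ℝ) * (Real.cos ξ - 1))
      = Real.sqrt (2 * (1 - Real.cos ξ)) * Real.exp (-((l:ℝ) * (1 - Real.cos ξ))) := by
    intro ξ; congr 2; ring
  rw [Tindex]
  simp only [hG, hGform]
  set G : ℝ → ℝ := fun ξ =>
    Real.sqrt (2 * (1 - Real.cos ξ)) * Real.exp (-((l:ℝ) * (1 - Real.cos ξ))) with hGdef
  split_ifs with h
  · -- l ≤ 1/4
    have hb : ∀ ξ : ℝ, G ξ ≤ 2 * Real.exp (-(2*(l:ℝ))) := fun ξ =>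
      bound_small l hl' h _ (by nlinarith [Real.cos_le_one ξ]) (by nlinarith [Real.neg_one_le_cos ξ])
    have hw : G Real.pi = 2 * Real.exp (-(2*(l:ℝ))) := by
      rw [hGdef]
      simp only [Real.cos_pi]
      rw [show 2*(1 - (-1:ℝ)) = 4 by ring,
        show Real.sqrt 4 = 2 by rw [show (4:ℝ) = 2^2 by norm_num, Real.sqrt_sq (by norm_num)]]
      congr 2
      ring
    have hsup : (⨆ ξ : ℝ, G ξ) = 2 * Real.exp (-(2*(l:ℝ))) := by
      refine le_antisymm (ciSup_le hb) ?_
      rw [← hw]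
      exact le_ciSup ⟨2 * Real.exp (-(2*(l:ℝ))), by rintro _ ⟨ξ, rfl⟩; exact hb ξ⟩ Real.pi
    rw [hsup, show (-2*(l:ℝ)) = -(2*(l:ℝ)) by ring]
    ring
  · -- l > 1/4
    push_neg at h
    have hb : ∀ ξ : ℝ, G ξ ≤ Real.exp (-(1/2)) / Real.sqrt l := fun ξ =>
      bound_gen l hl' _ (by nlinarith [Real.cos_le_one ξ])
    set c : ℝ := 1 - 1/(2*(l:ℝ)) with hcdef
    have hc1 : c ≤ 1 := by
      rw [hcdef]
      have : 0 < 1/(2*(l:ℝ)) := by positivity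
      linarith
    have hcm1 : -1 ≤ c := by
      rw [hcdef]
      have : 1/(2*(l:ℝ)) < 2 := by
        rw [div_lt_iff₀ (by linarith)]
        nlinarith
      linarith
    have hw : G (Real.arccos c) = Real.exp (-(1/2)) / Real.sqrt l := by
      rw [hGdef]
      simp only [Real.cos_arccos hcm1 hc1]
      rw [show 2*(1-c) = ((l:ℝ))⁻¹ by rw [hcdef]; field_simp; try ring,
        show -((l:ℝ)*(1-c)) = -(1/2) by rw [hcdef]; field_simp; try ring,
        Real.sqrt_inv]
      rw [inv_mul_eq_div]
    have hsup : (⨆ ξ : ℝ, G ξ) = Real.exp (-(1/2)) / Real.sqrt l := by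
      refine le_antisymm (ciSup_le hb) ?_
      rw [← hw]
      exact le_ciSup ⟨Real.exp (-(1/2)) / Real.sqrt l, by rintro _ ⟨ξ, rfl⟩; exact hb ξ⟩
        (Real.arccos c)
    rw [hsup]
    have hs : Real.sqrt (l:ℝ) ≠ 0 := ne_of_gt (Real.sqrt_pos.mpr hl')
    field_simp
end

section
/- For a Gamma distribution with shape k > 0 and scale θ > 0, with Fourier transform f̂(ξ) = (1 + iθξ)^{-k}, one has T(F) = (1/(2√k)) (1 + 1/k)^{-(k+1)/2}. -/
open MeasureTheory Complex

namespace GammaAux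

open Real Set Filter Metric ProbabilityTheory

noncomputable def lap (a : ℝ) (b : ℂ) : ℂ :=
  ∫ t in Ioi (0:ℝ), (t:ℂ) ^ ((a:ℂ) - 1) * Complex.exp (-(b * t))

lemma realInt {a r : ℝ} (ha : 0 < a) (hr : 0 < r) :
    IntegrableOn (fun t : ℝ => t ^ (a - 1) * Real.exp (-(r * t))) (Ioi 0) := by
  have h0 : IntegrableOn (fun t : ℝ => Real.exp (-t) * t ^ (a - 1)) (Ioi 0) :=
    Real.GammaIntegral_convergent ha
  have h1 : IntegrableOn (fun t : ℝ => Real.exp (-(r * t)) * (r * t) ^ (a - 1)) (Ioi 0) := by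
    have := (integrableOn_Ioi_comp_mul_left_iff
      (fun t : ℝ => Real.exp (-t) * t ^ (a - 1)) 0 hr).mpr (by simpa using h0)
    simpa using this
  have h2 : IntegrableOn (fun t : ℝ =>
      r ^ (1 - a) * (Real.exp (-(r * t)) * (r * t) ^ (a - 1))) (Ioi 0) := h1.const_mul _
  refine h2.congr_fun (fun t ht => ?_) measurableSet_Ioi
  have ht' : (0:ℝ) < t := ht
  beta_reduce
  rw [Real.mul_rpow hr.le ht'.le]
  have key : r ^ (1 - a) * r ^ (a - 1) = 1 := by
    rw [← Real.rpow_add hr]; simp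
  linear_combination Real.exp (-(r * t)) * t ^ (a - 1) * key

lemma measAux (a : ℝ) (b : ℂ) :
    AEStronglyMeasurable (fun t : ℝ => (t:ℂ) ^ ((a:ℂ) - 1) * Complex.exp (-(b * t)))
      (volume.restrict (Ioi 0)) := by
  apply Measurable.aestronglyMeasurable
  exact (measurable_ofReal.pow_const _).mul
    ((measurable_const.mul measurable_ofReal).neg.cexp)

lemma normAux {a : ℝ} {t : ℝ} (ht : 0 < t) (b : ℂ) :
    ‖(t:ℂ) ^ ((a:ℂ) - 1) * Complex.exp (-(b * t))‖ = t ^ (a - 1) * Real.exp (-(b.re * t)) := by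
  rw [norm_mul, Complex.norm_exp,
    Complex.norm_cpow_eq_rpow_re_of_pos ht]
  simp

lemma cInt {a : ℝ} (ha : 0 < a) {b : ℂ} (hb : 0 < b.re) :
    IntegrableOn (fun t : ℝ => (t:ℂ) ^ ((a:ℂ) - 1) * Complex.exp (-(b * t))) (Ioi 0) := by
  refine Integrable.mono' (realInt ha hb) (measAux a b) ?_
  filter_upwards [ae_restrict_mem measurableSet_Ioi] with t ht
  rw [normAux ht b]

lemma lap_hasDeriv {a : ℝ} (ha : 0 < a) {b : ℂ} (hb : 0 < b.re) :
    HasDerivAt (lap a)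
      (∫ t in Ioi (0:ℝ), -(t:ℂ) * ((t:ℂ) ^ ((a:ℂ) - 1) * Complex.exp (-(b * t)))) b := by
  set ε := b.re / 2 with hε
  have hε0 : 0 < ε := by positivity
  have H := hasDerivAt_integral_of_dominated_loc_of_deriv_le (𝕜 := ℂ)
    (μ := volume.restrict (Ioi 0))
    (F := fun x (t : ℝ) => (t:ℂ) ^ ((a:ℂ) - 1) * Complex.exp (-(x * t)))
    (F' := fun x (t : ℝ) => -(t:ℂ) * ((t:ℂ) ^ ((a:ℂ) - 1) * Complex.exp (-(x * t))))
    (bound := fun t : ℝ => t ^ ((a + 1) - 1) * Real.exp (-(ε * t)))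
    (Metric.ball_mem_nhds b hε0) (Eventually.of_forall fun x => measAux a x) (cInt ha hb)
    ?_ ?_ ?_ ?_
  · exact H.2
  · -- measurability of F' b
    apply Measurable.aestronglyMeasurable
    exact measurable_ofReal.neg.mul ((measurable_ofReal.pow_const _).mul
      ((measurable_const.mul measurable_ofReal).neg.cexp))
  · -- bound
    filter_upwards [ae_restrict_mem measurableSet_Ioi] with t ht x hx
    have ht' : (0:ℝ) < t := ht
    rw [norm_mul, normAux ht' x]
    have h1 : ‖-(t:ℂ)‖ = t := by
      rw [norm_neg, Complex.norm_real, Real.norm_of_nonneg ht'.le]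
    rw [h1]
    have hre : ε ≤ x.re := by
      have := Complex.abs_re_le_norm (x - b)
      have hd : dist x b < ε := mem_ball.mp hx
      rw [Complex.dist_eq] at hd
      have : |x.re - b.re| < ε := by
        simpa using lt_of_le_of_lt (by simpa using Complex.abs_re_le_norm (x - b)) hd
      cases abs_lt.mp this with
      | intro h1 h2 => simp only [hε]; linarith
    have hexp : Real.exp (-(x.re * t)) ≤ Real.exp (-(ε * t)) := by
      apply Real.exp_le_exp.mpr
      nlinarith
    calc t * (t ^ (a - 1) * Real.exp (-(x.re * t)))
        = t ^ ((a+1)-1) * Real.exp (-(x.re * t)) := by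
          rw [show (a+1)-1 = 1 + (a-1) by ring, Real.rpow_add ht', Real.rpow_one, mul_assoc]
      _ ≤ t ^ ((a+1)-1) * Real.exp (-(ε * t)) := by
          exact mul_le_mul_of_nonneg_left hexp (Real.rpow_nonneg ht'.le _)
  · exact realInt (by linarith) hε0
  · -- differentiability
    filter_upwards [ae_restrict_mem measurableSet_Ioi] with t _ x _
    have h1 : HasDerivAt (fun x : ℂ => -(x * t)) (-(t:ℂ)) x := by
      exact (hasDerivAt_mul_const (t:ℂ)).neg
    have h2 := h1.cexp
    have h3 := h2.const_mul ((t:ℂ) ^ ((a:ℂ) - 1))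
    exact h3.congr_deriv (by ring)

lemma lap_eq {a : ℝ} (ha : 0 < a) {b : ℂ} (hb : 0 < b.re) :
    lap a b = (1 / b) ^ (a:ℂ) * Complex.Gamma a := by
  set U : Set ℂ := {z | 0 < z.re} with hU
  have hUopen : IsOpen U := isOpen_lt continuous_const Complex.continuous_re
  have hUpre : IsPreconnected U := (convex_halfSpace_re_gt 0).isPreconnected
  have hF : AnalyticOnNhd ℂ (lap a) U := by
    apply DifferentiableOn.analyticOnNhd ?_ hUopen
    intro z hz
    exact ((lap_hasDeriv ha hz).differentiableAt).differentiableWithinAt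
  have hG : AnalyticOnNhd ℂ (fun b => (1 / b) ^ (a:ℂ) * Complex.Gamma a) U := by
    apply DifferentiableOn.analyticOnNhd ?_ hUopen
    intro z hz
    apply DifferentiableAt.differentiableWithinAt
    apply DifferentiableAt.mul_const
    have hz0 : z ≠ 0 := by
      intro h; rw [h] at hz; simp [hU] at hz
    have hslit : 1 / z ∈ Complex.slitPlane := by
      rw [Complex.mem_slitPlane_iff]
      left
      rw [one_div, Complex.inv_re]
      exact div_pos hz (Complex.normSq_pos.mpr hz0)
    exact ((differentiableAt_const _).div differentiableAt_id hz0).cpow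
      (differentiableAt_const _) hslit
  have h1U : (1:ℂ) ∈ U := by simp [hU]
  have hfreq : ∃ᶠ z in nhdsWithin (1:ℂ) {(1:ℂ)}ᶜ,
      lap a z = (1 / z) ^ (a:ℂ) * Complex.Gamma a := by
    have htend : Tendsto (fun n : ℕ => (1 + (1:ℝ)/(n+1) : ℝ) : ℕ → ℂ) atTop
        (nhdsWithin (1:ℂ) {(1:ℂ)}ᶜ) := by
      rw [tendsto_nhdsWithin_iff]
      constructor
      · have : Tendsto (fun n : ℕ => (1 + (1:ℝ)/(n+1) : ℝ)) atTop (nhds 1) := by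
          have := tendsto_one_div_add_atTop_nhds_zero_nat (𝕜 := ℝ)
          simpa using (tendsto_const_nhds (x := (1:ℝ))).add this
        exact (Complex.continuous_ofReal.tendsto 1).comp this
      · filter_upwards with n
        simp only [mem_compl_iff, mem_singleton_iff]
        intro h
        have : (1 + (1:ℝ)/(n+1)) = 1 := by exact_mod_cast h
        have : (1:ℝ)/(n+1) = 0 := by linarith
        simp at this
        linarith [this]
    apply htend.frequently
    apply Frequently.of_forall
    intro n
    set r : ℝ := 1 + (1:ℝ)/(n+1) with hr
    have hr0 : 0 < r := by positivity
    have := Complex.integral_cpow_mul_exp_neg_mul_Ioi (a := (a:ℂ)) (r := r)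
      (by simpa using ha) hr0
    rw [lap]
    rw [show ((r:ℝ):ℂ) = (r:ℂ) from rfl]
    rw [show (Complex.Gamma (a:ℂ)) = Complex.Gamma (a:ℂ) from rfl]
    simp only [← this]
  exact hF.eqOn_of_preconnected_of_frequently_eq hG hUpre h1U hfreq hb

-- reduce integral over gammaMeasure to an integral over Ioi 0
lemma integral_gammaMeasure (k r : ℝ) (hk : 0 < k) (hr : 0 < r) (g : ℝ → ℂ)
    (hg : Measurable g) :
    ∫ x, g x ∂(gammaMeasure k r) =
      ∫ x in Ioi (0:ℝ), (↑(r ^ k / Real.Gamma k) * ((x:ℂ) ^ ((k:ℂ) - 1) *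
        (Real.exp (-(r * x)) * g x))) := by
  rw [gammaMeasure]
  rw [show gammaPDF k r = fun x => ((gammaPDFReal k r x).toNNReal : ENNReal) from rfl]
  rw [integral_withDensity_eq_integral_smul ((measurable_gammaPDFReal k r).real_toNNReal) g]
  have h0 : ∀ᵐ x : ℝ, x ≠ 0 := by
    rw [ae_iff]
    simp only [ne_eq, not_not, setOf_eq_eq_singleton]
    exact measure_singleton 0
  rw [← integral_indicator measurableSet_Ioi]
  apply integral_congr_ae
  filter_upwards [h0] with x hx
  rcases lt_trichotomy x 0 with hneg | hzero | hpos
  · rw [indicator_of_notMem (by simpa using hneg.not_gt)]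
    have : gammaPDFReal k r x = 0 := by
      rw [gammaPDFReal, if_neg (not_le.mpr hneg)]
    simp [this]
  · exact absurd hzero hx
  · rw [indicator_of_mem (mem_Ioi.mpr hpos)]
    rw [gammaPDFReal, if_pos hpos.le]
    rw [NNReal.smul_def, Real.coe_toNNReal _ (by positivity)]
    rw [Complex.real_smul]
    push_cast [Complex.ofReal_cpow hpos.le]
    ring

lemma ft_gamma (k r : ℝ) (hk : 0 < k) (hr : 0 < r) (ξ : ℝ) :
    ft (gammaMeasure k r) ξ =
      ↑(r ^ k / Real.Gamma k) * (lap k ((r:ℂ) + Complex.I * ξ)) := by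
  rw [ft, integral_gammaMeasure k r hk hr _ (by fun_prop), lap, ← integral_const_mul]
  apply setIntegral_congr_fun measurableSet_Ioi
  intro x hx
  have : (Real.exp (-(r * x)) : ℂ) * Complex.exp (-(Complex.I * ξ * x))
      = Complex.exp (-(((r:ℂ) + Complex.I * ξ) * x)) := by
    rw [Complex.ofReal_exp, ← Complex.exp_add]
    congr 1
    push_cast
    ring
  dsimp only
  rw [← this]

lemma ft'_gamma (k r : ℝ) (hk : 0 < k) (hr : 0 < r) (ξ : ℝ) :
    ft' (gammaMeasure k r) ξ =
      ↑(r ^ k / Real.Gamma k) * (-Complex.I) * (lap (k+1) ((r:ℂ) + Complex.I * ξ)) := by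
  rw [ft', integral_gammaMeasure k r hk hr _ (by fun_prop), lap, mul_assoc,
    ← integral_const_mul (-Complex.I), ← integral_const_mul ((r ^ k / Real.Gamma k : ℝ) : ℂ)]
  apply setIntegral_congr_fun measurableSet_Ioi
  intro x hx
  dsimp only
  have hx' : (0:ℝ) < x := hx
  have hexp : (Real.exp (-(r * x)) : ℂ) * Complex.exp (-(Complex.I * ξ * x))
      = Complex.exp (-(((r:ℂ) + Complex.I * ξ) * x)) := by
    rw [Complex.ofReal_exp, ← Complex.exp_add]
    congr 1
    push_cast
    ring
  have hpow : (x:ℂ) ^ (((k+1 : ℝ) : ℂ) - 1) = (x:ℂ) ^ ((k:ℂ) - 1) * (x:ℂ) := by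
    rw [show (((k+1 : ℝ) : ℂ) - 1) = ((k:ℂ) - 1) + 1 by push_cast; ring,
      Complex.cpow_add _ _ (by exact_mod_cast hx'.ne'), Complex.cpow_one]
  rw [hpow, ← hexp]
  ring

lemma norm_formula (k r : ℝ) (hk : 0 < k) (hr : 0 < r) (ξ : ℝ) :
    ‖ft (gammaMeasure k r) ξ - ft' (gammaMeasure k r) ξ / ft' (gammaMeasure k r) 0‖
      = r ^ k * |ξ| * (r^2 + ξ^2) ^ (-(k+1)/2) := by
  have hΓk : 0 < Real.Gamma k := Real.Gamma_pos_of_pos hk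
  have hΓkC : ((Real.Gamma k : ℝ) : ℂ) ≠ 0 := by exact_mod_cast hΓk.ne'
  have hre : ∀ ξ' : ℝ, ((r:ℂ) + Complex.I * ξ').re = r := by intro ξ'; simp
  set z : ℂ := (r:ℂ) + Complex.I * ξ with hzdef
  have hzre : z.re = r := hre ξ
  have hzre' : (0:ℝ) < z.re := by rw [hzre]; exact hr
  have hz0 : z ≠ 0 := by
    intro h; rw [h] at hzre; simp at hzre; exact hr.ne' hzre.symm
  set v : ℂ := 1 / z with hvdef
  have hv0 : v ≠ 0 := one_div_ne_zero hz0
  -- ft value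
  have hft : ft (gammaMeasure k r) ξ = ↑(r^k) * v ^ (k:ℂ) := by
    rw [ft_gamma k r hk hr ξ, lap_eq hk hzre', Complex.Gamma_ofReal, Complex.ofReal_div,
      ← hvdef]
    field_simp
  -- ft' values
  set C : ℂ := ↑(r ^ k / Real.Gamma k) * (-Complex.I) * ↑(Real.Gamma (k+1)) with hCdef
  have hC0 : C ≠ 0 := by
    apply mul_ne_zero (mul_ne_zero ?_ ?_) ?_
    · exact_mod_cast (div_pos (Real.rpow_pos_of_pos hr k) hΓk).ne'
    · simpa using Complex.I_ne_zero
    · exact_mod_cast (Real.Gamma_pos_of_pos (by linarith)).ne'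
  have hft' : ∀ ξ' : ℝ, ft' (gammaMeasure k r) ξ'
      = C * (1/((r:ℂ) + Complex.I * ξ')) ^ ((k+1:ℝ):ℂ) := by
    intro ξ'
    rw [ft'_gamma k r hk hr ξ', lap_eq (by linarith : (0:ℝ) < k+1) (by rw [hre]; exact hr),
      Complex.Gamma_ofReal, hCdef]
    push_cast
    ring
  have h00 : (r:ℂ) + Complex.I * ((0:ℝ):ℂ) = (r:ℂ) := by simp
  have hw0 : (1/((r:ℂ))) ^ ((k+1:ℝ):ℂ) = ↑((1/r) ^ (k+1) : ℝ) := by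
    rw [show (1/(r:ℂ)) = ((1/r : ℝ):ℂ) by push_cast; ring]
    rw [← Complex.ofReal_cpow (by positivity) (k+1)]
  have hratio : ft' (gammaMeasure k r) ξ / ft' (gammaMeasure k r) 0
      = v ^ ((k+1:ℝ):ℂ) * ↑(r ^ (k+1) : ℝ) := by
    rw [hft' ξ, hft' 0, h00, hw0, ← hzdef, ← hvdef]
    rw [mul_div_mul_left _ _ hC0]
    rw [div_eq_mul_inv, ← Complex.ofReal_inv, one_div, Real.inv_rpow hr.le, inv_inv]
  -- the difference
  have hsplit : v ^ ((k+1:ℝ):ℂ) = v ^ (k:ℂ) * v := by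
    rw [show ((k+1:ℝ):ℂ) = (k:ℂ) + 1 by push_cast; ring,
      Complex.cpow_add _ _ hv0, Complex.cpow_one]
  have hrk1 : (r:ℝ) ^ (k+1) = r ^ k * r := Real.rpow_add_one hr.ne' k
  have hone : (1:ℂ) - ↑r * v = (Complex.I * ξ) * v := by
    rw [hvdef]
    field_simp
    rw [hzdef]; ring
  have hD : ft (gammaMeasure k r) ξ - ft' (gammaMeasure k r) ξ / ft' (gammaMeasure k r) 0
      = ↑(r^k) * v ^ ((k+1:ℝ):ℂ) * (Complex.I * ξ) := by
    rw [hft, hratio, hsplit, hrk1]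
    push_cast
    calc ↑(r^k) * v ^ (k:ℂ) - v ^ (k:ℂ) * v * (↑(r^k) * ↑r)
        = ↑(r^k) * v ^ (k:ℂ) * ((1:ℂ) - ↑r * v) := by ring
      _ = ↑(r^k) * v ^ (k:ℂ) * ((Complex.I * ξ) * v) := by rw [hone]
      _ = ↑(r^k) * (v ^ (k:ℂ) * v) * (Complex.I * ξ) := by ring
  -- norms
  have habsz : ‖z‖ = Real.sqrt (r^2 + ξ^2) := by
    have him : z.im = ξ := by simp [hzdef]
    rw [Complex.norm_def, Complex.normSq_apply, hzre, him]
    congr 1; ring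
  have hS : (0:ℝ) ≤ r^2 + ξ^2 := by positivity
  have h1 : (Real.sqrt (r^2+ξ^2))⁻¹ ^ (k+1) = (r^2 + ξ^2) ^ (-(k+1)/2) := by
    rw [Real.inv_rpow (Real.sqrt_nonneg _), Real.sqrt_eq_rpow, ← Real.rpow_mul hS,
      ← Real.rpow_neg hS]
    congr 1; ring
  have hnv : ‖v ^ ((k+1:ℝ):ℂ)‖ = (r^2 + ξ^2) ^ (-(k+1)/2) := by
    rw [Complex.norm_cpow_of_ne_zero hv0]
    simp only [Complex.ofReal_re, Complex.ofReal_im, mul_zero, Real.exp_zero, div_one]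
    rw [hvdef, norm_div, norm_one, habsz, one_div]
    exact h1
  rw [hD, norm_mul, norm_mul, hnv]
  rw [Complex.norm_real, Real.norm_of_nonneg (Real.rpow_nonneg hr.le k)]
  rw [norm_mul, Complex.norm_I, one_mul, Complex.norm_real, Real.norm_eq_abs]
  ring

lemma amgm' (k : ℝ) (hk : 0 < k) {s : ℝ} (hs : 0 ≤ s) :
    s ≤ ((k + s) / (k + 1)) ^ (k + 1) := by
  have hk1 : (0:ℝ) < k + 1 := by linarith
  have h := Real.geom_mean_le_arith_mean2_weighted (w₁ := k/(k+1)) (w₂ := 1/(k+1))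
    (p₁ := 1) (p₂ := s) (by positivity) (by positivity) zero_le_one hs (by field_simp)
  rw [Real.one_rpow, one_mul, mul_one] at h
  have h2 : s ^ (1/(k+1)) ≤ (k + s)/(k+1) := by
    calc s ^ (1/(k+1)) ≤ k/(k+1) + 1/(k+1) * s := h
      _ = (k + s)/(k+1) := by field_simp
  have h3 := Real.rpow_le_rpow (Real.rpow_nonneg hs _) h2 hk1.le
  rwa [← Real.rpow_mul hs, one_div, inv_mul_cancel₀ hk1.ne', Real.rpow_one] at h3

lemma g_le (k : ℝ) (hk : 0 < k) (u : ℝ) :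
    |u| * (1 + u^2) ^ (-(k+1)/2) ≤ (1 / Real.sqrt k) * (1 + 1/k) ^ (-(k+1)/2) := by
  have h1u : (0:ℝ) < 1 + u^2 := by positivity
  have h1k : (0:ℝ) < 1 + 1/k := by positivity
  have hP : (0:ℝ) < (1 + u^2) ^ (k+1) := Real.rpow_pos_of_pos h1u _
  have hQ : (0:ℝ) < (k/(k+1)) ^ (k+1) := Real.rpow_pos_of_pos (by positivity) _
  have lhs_nonneg : 0 ≤ |u| * (1 + u^2) ^ (-(k+1)/2) := by positivity
  have rhs_nonneg : 0 ≤ (1 / Real.sqrt k) * (1 + 1/k) ^ (-(k+1)/2) := by positivity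
  rw [← Real.sqrt_sq lhs_nonneg, ← Real.sqrt_sq rhs_nonneg]
  apply Real.sqrt_le_sqrt
  have hsq : ∀ (x : ℝ) (hx : 0 < x) (c : ℝ), ((x ^ (-c/2)) ^ (2:ℕ)) = x ^ (-c) := by
    intro x hx c
    rw [← Real.rpow_natCast (x ^ (-c/2)), ← Real.rpow_mul hx.le]
    norm_num
  rw [mul_pow, mul_pow, hsq _ h1u, hsq _ h1k, _root_.sq_abs]
  rw [div_pow, one_pow, Real.sq_sqrt hk.le]
  -- now: u^2 * (1+u^2)^(-(k+1)) ≤ 1/k * (1+1/k)^(-(k+1))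
  have key : k * u^2 ≤ (k/(k+1)) ^ (k+1) * (1 + u^2) ^ (k+1) := by
    have h := amgm' k hk (s := k * u^2) (by positivity)
    calc k * u^2 ≤ ((k + k*u^2)/(k+1)) ^ (k+1) := h
      _ = ((k/(k+1)) * (1 + u^2)) ^ (k+1) := by congr 1; field_simp
      _ = (k/(k+1)) ^ (k+1) * (1 + u^2) ^ (k+1) := Real.mul_rpow (by positivity) h1u.le
  have hQ' : (1 + 1/k) ^ (-(k+1)) = (k/(k+1)) ^ (k+1) := by
    rw [show (1 + 1/k) = ((k+1)/k) by field_simp, Real.rpow_neg (by positivity),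
      ← Real.inv_rpow (by positivity), show ((k+1)/k : ℝ)⁻¹ = k/(k+1) by
        rw [inv_div]]
  rw [hQ', Real.rpow_neg h1u.le]
  rw [mul_inv_le_iff₀ hP]
  calc u^2 = (k * u^2) / k := by field_simp
    _ ≤ ((k/(k+1)) ^ (k+1) * (1 + u^2) ^ (k+1)) / k := by gcongr
    _ = 1/k * (k/(k+1)) ^ (k+1) * (1 + u^2) ^ (k+1) := by ring

lemma g_attain (k : ℝ) (hk : 0 < k) :
    |1/Real.sqrt k| * (1 + (1/Real.sqrt k)^2) ^ (-(k+1)/2)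
      = (1 / Real.sqrt k) * (1 + 1/k) ^ (-(k+1)/2) := by
  have hsk : 0 < Real.sqrt k := Real.sqrt_pos.mpr hk
  rw [abs_of_pos (by positivity), div_pow, one_pow, Real.sq_sqrt hk.le]

lemma sup_g (k : ℝ) (hk : 0 < k) :
    (⨆ u : ℝ, |u| * (1 + u^2) ^ (-(k+1)/2))
      = (1 / Real.sqrt k) * (1 + 1/k) ^ (-(k+1)/2) := by
  apply le_antisymm
  · exact ciSup_le fun u => g_le k hk u
  · have hb : BddAbove (range fun u : ℝ => |u| * (1 + u^2) ^ (-(k+1)/2)) := by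
      refine ⟨(1 / Real.sqrt k) * (1 + 1/k) ^ (-(k+1)/2), ?_⟩
      rintro x ⟨u, rfl⟩
      exact g_le k hk u
    have := le_ciSup hb (1/Real.sqrt k)
    rwa [g_attain k hk] at this

lemma g_eq (k r : ℝ) (hk : 0 < k) (hr : 0 < r) (u : ℝ) :
    r ^ k * |r * u| * (r^2 + (r*u)^2) ^ (-(k+1)/2) = |u| * (1 + u^2) ^ (-(k+1)/2) := by
  have h1 : r^2 + (r*u)^2 = r^2 * (1+u^2) := by ring
  rw [h1, Real.mul_rpow (by positivity) (by positivity)]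
  have h2 : ((r^2 : ℝ)) ^ (-(k+1)/2) = r ^ (-(k+1)) := by
    rw [← Real.rpow_natCast r 2, ← Real.rpow_mul hr.le]
    congr 1
    push_cast
    ring
  have h3 : r ^ k * r * r ^ (-(k+1)) = 1 := by
    rw [show r ^ k * r * r ^ (-(k+1)) = r ^ k * r ^ (-(k+1)) * r by ring,
      ← Real.rpow_add hr, show k + -(k+1) = -1 by ring, Real.rpow_neg_one]
    field_simp
  rw [h2, abs_mul, abs_of_pos hr]
  linear_combination (|u| * (1+u^2) ^ (-(k+1)/2)) * h3

end GammaAux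

theorem stmt_15 (k θ : ℝ) (hk : 0 < k) (hθ : 0 < θ) :
    Tindex (ProbabilityTheory.gammaMeasure k (1 / θ))
      = 1 / (2 * Real.sqrt k) * (1 + 1 / k) ^ (-(k + 1) / 2) := by
  open GammaAux Set in
  set r : ℝ := 1 / θ with hrdef
  have hr : 0 < r := by positivity
  rw [Tindex]
  have hstep : (⨆ ξ : ℝ, ‖ft (ProbabilityTheory.gammaMeasure k r) ξ -
      ft' (ProbabilityTheory.gammaMeasure k r) ξ / ft' (ProbabilityTheory.gammaMeasure k r) 0‖)
      = (1 / Real.sqrt k) * (1 + 1/k) ^ (-(k+1)/2) := by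
    have h1 : (⨆ ξ : ℝ, ‖ft (ProbabilityTheory.gammaMeasure k r) ξ -
        ft' (ProbabilityTheory.gammaMeasure k r) ξ / ft' (ProbabilityTheory.gammaMeasure k r) 0‖)
        = ⨆ ξ : ℝ, r ^ k * |ξ| * (r^2 + ξ^2) ^ (-(k+1)/2) :=
      iSup_congr fun ξ => norm_formula k r hk hr ξ
    have hsurj : Function.Surjective (fun u : ℝ => r * u) :=
      (mulLeft_bijective₀ r hr.ne').surjective
    have h2 : (⨆ ξ : ℝ, r ^ k * |ξ| * (r^2 + ξ^2) ^ (-(k+1)/2))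
        = ⨆ u : ℝ, r ^ k * |r * u| * (r^2 + (r*u)^2) ^ (-(k+1)/2) :=
      (hsurj.iSup_comp _).symm
    have h3 : (⨆ u : ℝ, r ^ k * |r * u| * (r^2 + (r*u)^2) ^ (-(k+1)/2))
        = ⨆ u : ℝ, |u| * (1 + u^2) ^ (-(k+1)/2) :=
      iSup_congr fun u => g_eq k r hk hr u
    rw [h1, h2, h3, sup_g k hk]
  rw [hstep]
  rw [show -(k+1)/2 = -(k + 1) / 2 by ring]
  ring
end

section
/- Let F be the CDF of a probability measure on [0,∞) with mean m > 0 and finite first moment, and define H(F) = (1/m)∫₀^∞ (F(x) - F_m(x))² dx, where F_m is the Heaviside step at m. Then 0 ≤ H(F) < 1. -/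
open MeasureTheory Complex

theorem stmt_18 (μ : Measure ℝ) [IsProbabilityMeasure μ]
    (hsupp : μ {x : ℝ | x < 0} = 0)
    (hint : Integrable (fun x : ℝ => x) μ)
    (m : ℝ) (hm : m = ∫ x, x ∂μ) (hmpos : 0 < m) :
    0 ≤ (1 / m) * ∫ x in Set.Ioi (0 : ℝ),
        ((μ (Set.Iic x)).toReal - if x < m then 0 else 1) ^ 2 ∧
      (1 / m) * (∫ x in Set.Ioi (0 : ℝ),
        ((μ (Set.Iic x)).toReal - if x < m then 0 else 1) ^ 2) < 1 := by
  classical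
  set F : ℝ → ℝ := fun x => (μ (Set.Iic x)).toReal with hFdef
  set G : ℝ → ℝ := fun x => (μ (Set.Ioi x)).toReal with hGdef
  have hFmono : Monotone F := fun a b hab =>
    ENNReal.toReal_mono (measure_ne_top μ _) (measure_mono (Set.Iic_subset_Iic.mpr hab))
  have hGanti : Antitone G := fun a b hab =>
    ENNReal.toReal_mono (measure_ne_top μ _) (measure_mono (Set.Ioi_subset_Ioi hab))
  have hFnn : ∀ x, 0 ≤ F x := fun x => ENNReal.toReal_nonneg
  have hGnn : ∀ x, 0 ≤ G x := fun x => ENNReal.toReal_nonneg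
  have hFmeas : Measurable F := hFmono.measurable
  have hGmeas : Measurable G := hGanti.measurable
  have hFG : ∀ x, F x + G x = 1 := by
    intro x
    have h1 : μ (Set.Iic x) + μ (Set.Ioi x) = 1 := by
      rw [← measure_union (Set.Iic_disjoint_Ioi le_rfl) measurableSet_Ioi, Set.Iic_union_Ioi,
        measure_univ]
    have h2 : (μ (Set.Iic x) + μ (Set.Ioi x)).toReal = (1 : ENNReal).toReal := by rw [h1]
    rwa [ENNReal.toReal_add (measure_ne_top μ _) (measure_ne_top μ _), ENNReal.toReal_one] at h2
  have hFle1 : ∀ x, F x ≤ 1 := fun x => by linarith [hFG x, hGnn x]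
  have hid_nn : 0 ≤ᵐ[μ] (fun x : ℝ => x) := by
    refine (ae_iff).mpr ?_
    simpa [not_le] using hsupp
  -- layer cake: m = ∫_{Ioi 0} G
  have hlayer : m = ∫ t in Set.Ioi (0 : ℝ), G t := by
    rw [hm, hint.integral_eq_integral_meas_lt hid_nn]
    rfl
  -- G is integrable on Ioi 0
  have hGint : IntegrableOn G (Set.Ioi (0 : ℝ)) := by
    refine ⟨hGmeas.aestronglyMeasurable.restrict, ?_⟩
    have h1 : ∀ t : ℝ, ‖G t‖ₑ = μ (Set.Ioi t) := by
      intro t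
      rw [Real.enorm_eq_ofReal (hGnn t), ENNReal.ofReal_toReal (measure_ne_top μ _)]
    have h2 : ∫⁻ t in Set.Ioi (0 : ℝ), ‖G t‖ₑ = ∫⁻ x, ENNReal.ofReal x ∂μ := by
      rw [lintegral_congr h1, lintegral_eq_lintegral_meas_lt μ hid_nn hint.aemeasurable]
      rfl
    rw [HasFiniteIntegral, h2]
    exact hint.lintegral_lt_top
  have hsplit : Set.Ioo (0 : ℝ) m ∪ Set.Ici m = Set.Ioi 0 := Set.Ioo_union_Ici_eq_Ioi hmpos
  have hdisj : Disjoint (Set.Ioo (0 : ℝ) m) (Set.Ici m) := by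
    rw [Set.disjoint_left]
    intro x hx hx'
    exact absurd hx.2 (not_lt.mpr hx')
  have hGint1 : IntegrableOn G (Set.Ioo (0 : ℝ) m) :=
    hGint.mono_set (by rw [← hsplit]; exact Set.subset_union_left)
  have hGint2 : IntegrableOn G (Set.Ici m) :=
    hGint.mono_set (by rw [← hsplit]; exact Set.subset_union_right)
  set B := ∫ t in Set.Ioo (0 : ℝ) m, G t with hBdef
  have hBnn : 0 ≤ B := setIntegral_nonneg measurableSet_Ioo fun x _ => hGnn x
  have hsum : B + ∫ t in Set.Ici m, G t = m := by
    have h := setIntegral_union (μ := volume) (f := G) hdisj measurableSet_Ici hGint1 hGint2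
    rw [hsplit] at h
    rw [hBdef]
    linarith [h, hlayer]
  have hGIci : ∫ t in Set.Ici m, G t = m - B := by linarith
  -- ∫_{Ioo 0 m} F = m - B
  have hconst : IntegrableOn (fun _ : ℝ => (1 : ℝ)) (Set.Ioo (0 : ℝ) m) :=
    integrableOn_const measure_Ioo_lt_top.ne
  have hFIoo : ∫ t in Set.Ioo (0 : ℝ) m, F t = m - B := by
    rw [setIntegral_congr_fun measurableSet_Ioo
      (show Set.EqOn F (fun t => 1 - G t) (Set.Ioo (0 : ℝ) m) from
        fun t _ => by have := hFG t; dsimp only; linarith),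
      integral_sub hconst hGint1, setIntegral_const]
    rw [Real.volume_real_Ioo_of_le (by linarith)]
    simp [hBdef]
  set q := F m with hqdef
  have hq0 : 0 ≤ q := hFnn m
  have hq1 : q ≤ 1 := hFle1 m
  have hGm : G m = 1 - q := by have := hFG m; linarith
  -- integrability of F on Ioo 0 m
  have hFint1 : IntegrableOn F (Set.Ioo (0 : ℝ) m) := by
    refine Integrable.mono' hconst hFmeas.aestronglyMeasurable.restrict ?_
    exact Filter.Eventually.of_forall fun x => by
      rw [Real.norm_of_nonneg (hFnn x)]; exact hFle1 x
  -- the dominating function D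
  set D : ℝ → ℝ := fun x => if x < m then q * F x else (1 - q) * G x with hDdef
  have hDmeas : Measurable D :=
    Measurable.ite (measurableSet_lt measurable_id measurable_const)
      (hFmeas.const_mul q) (hGmeas.const_mul (1 - q))
  have hDint1 : IntegrableOn D (Set.Ioo (0 : ℝ) m) := by
    refine IntegrableOn.congr_fun (hFint1.const_mul q) ?_ measurableSet_Ioo
    intro x hx
    simp [hDdef, hx.2]
  have hDint2 : IntegrableOn D (Set.Ici m) := by
    refine IntegrableOn.congr_fun (hGint2.const_mul (1 - q)) ?_ measurableSet_Ici
    intro x hx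
    simp [hDdef, not_lt.mpr (Set.mem_Ici.mp hx)]
  have hDint : IntegrableOn D (Set.Ioi (0 : ℝ)) := by
    rw [← hsplit]; exact hDint1.union hDint2
  -- pointwise bound
  have hpt : ∀ x ∈ Set.Ioi (0 : ℝ), (F x - if x < m then 0 else 1) ^ 2 ≤ D x := by
    intro x _
    by_cases h : x < m
    · simp only [hDdef, if_pos h]
      have h1 : F x ≤ q := hFmono h.le
      nlinarith [hFnn x]
    · simp only [hDdef, if_neg h]
      have h2 : F x - 1 = -(G x) := by have := hFG x; linarith
      have h3 : G x ≤ 1 - q := by rw [← hGm]; exact hGanti (not_lt.mp h)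
      rw [h2]
      nlinarith [hGnn x]
  have hDnn : ∀ x, 0 ≤ D x := by
    intro x
    by_cases h : x < m
    · simp only [hDdef, if_pos h]; exact mul_nonneg hq0 (hFnn x)
    · simp only [hDdef, if_neg h]; exact mul_nonneg (by linarith) (hGnn x)
  -- the integrand is integrable
  have hJmeas : Measurable fun x : ℝ => (F x - if x < m then 0 else 1) ^ 2 := by
    apply Measurable.pow_const
    exact hFmeas.sub (Measurable.ite (measurableSet_lt measurable_id measurable_const)
      measurable_const measurable_const)
  have hJint : IntegrableOn (fun x : ℝ => (F x - if x < m then 0 else 1) ^ 2)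
      (Set.Ioi (0 : ℝ)) := by
    refine Integrable.mono hDint hJmeas.aestronglyMeasurable.restrict ?_
    rw [ae_restrict_iff' measurableSet_Ioi]
    refine Filter.Eventually.of_forall fun x hx => ?_
    rw [Real.norm_of_nonneg (sq_nonneg _), Real.norm_of_nonneg (hDnn x)]
    exact hpt x hx
  -- value of ∫ D
  have hDval : ∫ x in Set.Ioi (0 : ℝ), D x = m - B := by
    rw [← hsplit, setIntegral_union hdisj measurableSet_Ici hDint1 hDint2]
    have e1 : ∫ x in Set.Ioo (0 : ℝ) m, D x = q * (m - B) := by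
      rw [setIntegral_congr_fun measurableSet_Ioo
        (show Set.EqOn D (fun x => q * F x) (Set.Ioo (0 : ℝ) m) from
          fun x hx => by simp [hDdef, hx.2]),
        integral_const_mul, hFIoo]
    have e2 : ∫ x in Set.Ici m, D x = (1 - q) * (m - B) := by
      rw [setIntegral_congr_fun measurableSet_Ici
        (show Set.EqOn D (fun x => (1 - q) * G x) (Set.Ici m) from
          fun x hx => by simp [hDdef, not_lt.mpr (Set.mem_Ici.mp hx)]),
        integral_const_mul, hGIci]
    rw [e1, e2]; ring
  -- B is strictly positive
  have hBpos : 0 < B := by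
    rcases lt_or_eq_of_le hBnn with h | h
    · exact h
    · exfalso
      have hae : (fun x => G x) =ᵐ[volume.restrict (Set.Ioo (0 : ℝ) m)] 0 :=
      (integral_eq_zero_iff_of_nonneg_ae (Filter.Eventually.of_forall fun x => hGnn x)
          hGint1).mp h.symm
      have h2 : ∀ᵐ x ∂(volume : Measure ℝ), x ∈ Set.Ioo (0 : ℝ) m → G x = 0 :=
        (ae_restrict_iff' measurableSet_Ioo).mp hae
      have h3 : ∃ y ∈ Set.Ioo (0 : ℝ) m, G y = 0 := by
        by_contra hcon
        push_neg at hcon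
        rw [ae_iff] at h2
        have hsub : Set.Ioo (0 : ℝ) m ⊆ {x | ¬(x ∈ Set.Ioo (0 : ℝ) m → G x = 0)} := by
          intro x hx
          simp only [Set.mem_setOf_eq, Classical.not_imp]
          exact ⟨hx, hcon x hx⟩
        have this : (volume : Measure ℝ) (Set.Ioo 0 m) ≤
            volume {x | ¬(x ∈ Set.Ioo (0 : ℝ) m → G x = 0)} := measure_mono hsub
        rw [h2] at this
        simp only [Real.volume_Ioo, nonpos_iff_eq_zero, ENNReal.ofReal_eq_zero] at this
        linarith
      obtain ⟨y, hy, hGy⟩ := h3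
      have hGm0 : G m = 0 := le_antisymm (by rw [← hGy]; exact hGanti hy.2.le) (hGnn m)
      have hIci0 : ∫ t in Set.Ici m, G t = 0 := by
        apply setIntegral_eq_zero_of_forall_eq_zero
        intro t ht
        exact le_antisymm (by rw [← hGm0]; exact hGanti ht) (hGnn t)
      rw [← h, hIci0] at hsum
      linarith
  -- conclusion
  have hkey : ∫ x in Set.Ioi (0 : ℝ), (F x - if x < m then 0 else 1) ^ 2 < m := by
    calc ∫ x in Set.Ioi (0 : ℝ), (F x - if x < m then 0 else 1) ^ 2
        ≤ ∫ x in Set.Ioi (0 : ℝ), D x := setIntegral_mono_on hJint hDint measurableSet_Ioi hpt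
      _ = m - B := hDval
      _ < m := by linarith
  constructor
  · exact mul_nonneg (by positivity)
      (setIntegral_nonneg measurableSet_Ioi fun x _ => sq_nonneg _)
  · calc (1 / m) * (∫ x in Set.Ioi (0 : ℝ), (F x - if x < m then 0 else 1) ^ 2)
        < (1 / m) * m := by
          exact mul_lt_mul_of_pos_left hkey (by positivity)
      _ = 1 := by field_simp
end

section
/- For a probability measure F on [0,∞) with mean m > 0 and finite first moment, the Pietra index P(F) = ∫_m^∞ (1-F(x)) dx satisfies the identity P(F) = (1/2)[G(F) + H(F)], where G(F) = 1 - (1/m)∫₀^∞(1-F(x))² dx is the Gini index and H(F) = (1/m)∫₀^∞ (F(x)-F_m(x))² dx. -/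
open MeasureTheory Complex

theorem stmt_19 (μ : Measure ℝ) [IsProbabilityMeasure μ]
    (hsupp : μ {x : ℝ | x < 0} = 0)
    (hint : Integrable (fun x : ℝ => x) μ)
    (m : ℝ) (hm : m = ∫ x, x ∂μ) (hmpos : 0 < m) :
    (1 / m) * ∫ x in Set.Ioi m, (1 - (μ (Set.Iic x)).toReal)
      = (1 / 2) * ((1 - (1 / m) * ∫ x in Set.Ioi (0 : ℝ), (1 - (μ (Set.Iic x)).toReal) ^ 2)
        + (1 / m) * ∫ x in Set.Ioi (0 : ℝ),
            ((μ (Set.Iic x)).toReal - if x < m then 0 else 1) ^ 2) := by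
  set g : ℝ → ℝ := fun t => (μ (Set.Ioi t)).toReal with hg
  -- basic properties of g
  have hg_anti : Antitone (fun t => μ (Set.Ioi t)) :=
    fun s t hst => measure_mono (Set.Ioi_subset_Ioi hst)
  have hg_mble : Measurable g := (hg_anti.measurable).ennreal_toReal
  have hg_nn : ∀ t, 0 ≤ g t := fun t => ENNReal.toReal_nonneg
  have hg_le_one : ∀ t, g t ≤ 1 := by
    intro t
    have := prob_le_one (μ := μ) (s := Set.Ioi t)
    simpa [g] using ENNReal.toReal_le_of_le_ofReal zero_le_one (by simpa using this)
  -- F x = 1 - g x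
  have hF : ∀ x : ℝ, (μ (Set.Iic x)).toReal = 1 - g x := by
    intro x
    have h1 : μ (Set.Iic x) = 1 - μ (Set.Ioi x) := by
      rw [← Set.compl_Ioi, measure_compl measurableSet_Ioi (measure_ne_top μ _), measure_univ]
    rw [h1, ENNReal.toReal_sub_of_le prob_le_one ENNReal.one_ne_top]
    simp [g]
  -- nonnegativity a.e. of id
  have h_nn : 0 ≤ᵐ[μ] (fun x : ℝ => x) := by
    rw [Filter.EventuallyLE, ae_iff]
    simpa [not_le] using hsupp
  -- layer cake
  have hmean : m = ∫ t in Set.Ioi (0:ℝ), g t := by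
    rw [hm, hint.integral_eq_integral_meas_lt h_nn]
    rfl
  -- finiteness of lintegral
  have hlkey := lintegral_eq_lintegral_meas_lt μ h_nn hint.aemeasurable
  have hfin : ∫⁻ t in Set.Ioi (0:ℝ), μ (Set.Ioi t) < ⊤ :=
    hlkey ▸ hint.lintegral_lt_top
  -- integrability of g on Ioi 0
  have hg_int : IntegrableOn g (Set.Ioi (0:ℝ)) := by
    refine ⟨hg_mble.aestronglyMeasurable.restrict, ?_⟩
    rw [hasFiniteIntegral_iff_ofReal (Filter.Eventually.of_forall hg_nn)]
    have : ∀ t : ℝ, ENNReal.ofReal (g t) = μ (Set.Ioi t) := fun t =>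
      ENNReal.ofReal_toReal (measure_ne_top μ _)
    simpa [this] using hfin
  -- integrability of g^2 on Ioi 0
  have hg2_int : IntegrableOn (fun t => g t ^ 2) (Set.Ioi (0:ℝ)) := by
    refine MeasureTheory.Integrable.mono hg_int ((hg_mble.pow_const 2).aestronglyMeasurable.restrict) ?_
    refine Filter.Eventually.of_forall fun t => ?_
    rw [Real.norm_eq_abs, Real.norm_eq_abs, _root_.abs_of_nonneg (hg_nn t),
      _root_.abs_of_nonneg (pow_nonneg (hg_nn t) 2)]
    nlinarith [hg_nn t, hg_le_one t]
  -- subsets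
  have hsub1 : Set.Ioo (0:ℝ) m ⊆ Set.Ioi 0 := Set.Ioo_subset_Ioi_self
  have hsub2 : Set.Ioi m ⊆ Set.Ioi (0:ℝ) := Set.Ioi_subset_Ioi hmpos.le
  have hsub3 : Set.Ici m ⊆ Set.Ioi (0:ℝ) := fun x hx => lt_of_lt_of_le hmpos hx
  set A := ∫ x in Set.Ioo (0:ℝ) m, g x with hA
  set B := ∫ x in Set.Ioi m, g x with hB
  set C := ∫ x in Set.Ioo (0:ℝ) m, g x ^ 2 with hC
  set D := ∫ x in Set.Ioi m, g x ^ 2 with hD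
  -- split of mean
  have hsplit : A + B = m := by
    rw [hmean, ← Set.Ioo_union_Ici_eq_Ioi hmpos,
      setIntegral_union (((Set.Iio_disjoint_Ici le_rfl).mono_left Set.Ioo_subset_Iio_self)) measurableSet_Ici
        (hg_int.mono_set hsub1) (hg_int.mono_set hsub3),
      integral_Ici_eq_integral_Ioi]
  have hsplit2 : ∫ x in Set.Ioi (0:ℝ), g x ^ 2 = C + D := by
    rw [← Set.Ioo_union_Ici_eq_Ioi hmpos,
      setIntegral_union (((Set.Iio_disjoint_Ici le_rfl).mono_left Set.Ioo_subset_Iio_self)) measurableSet_Ici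
        (hg2_int.mono_set hsub1) (hg2_int.mono_set hsub3),
      integral_Ici_eq_integral_Ioi]
  -- rewrite the three goal integrals
  have e1 : ∫ x in Set.Ioi m, (1 - (μ (Set.Iic x)).toReal) = B := by
    rw [hB]; apply setIntegral_congr_fun measurableSet_Ioi
    intro x _; simp only [hF]; ring
  have e2 : ∫ x in Set.Ioi (0:ℝ), (1 - (μ (Set.Iic x)).toReal) ^ 2 = C + D := by
    rw [← hsplit2]; apply setIntegral_congr_fun measurableSet_Ioi
    intro x _; simp only [hF]; ring
  -- the H integral
  have e3 : ∫ x in Set.Ioi (0:ℝ), ((μ (Set.Iic x)).toReal - if x < m then 0 else 1) ^ 2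
      = (m - 2 * A + C) + D := by
    have i1 : IntegrableOn (fun _ : ℝ => (1:ℝ)) (Set.Ioo 0 m) :=
      integrableOn_const measure_Ioo_lt_top.ne
    have i2 : IntegrableOn (fun x => 2 * g x) (Set.Ioo (0:ℝ) m) :=
      (hg_int.mono_set hsub1).const_mul 2
    have i12 : IntegrableOn (fun x => 1 - 2 * g x) (Set.Ioo (0:ℝ) m) := i1.sub i2
    have i3 := hg2_int.mono_set hsub1
    have heq : Set.EqOn (fun x => (1 - 2 * g x + g x ^ 2))
        (fun x : ℝ => ((μ (Set.Iic x)).toReal - if x < m then 0 else 1) ^ 2)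
        (Set.Ioo (0:ℝ) m) := by
      intro x hx; simp only [hF, if_pos hx.2]; ring
    rw [← Set.Ioo_union_Ici_eq_Ioi hmpos,
      setIntegral_union (((Set.Iio_disjoint_Ici le_rfl).mono_left Set.Ioo_subset_Iio_self)) measurableSet_Ici ?_ ?_]
    · have p1 : ∫ x in Set.Ioo (0:ℝ) m, ((μ (Set.Iic x)).toReal - if x < m then 0 else 1) ^ 2
          = m - 2 * A + C := by
        rw [← setIntegral_congr_fun measurableSet_Ioo heq,
          integral_add i12 i3, integral_sub i1 i2, integral_const, integral_const_mul]
        simp [Real.volume_Ioo, ENNReal.toReal_ofReal hmpos.le, max_eq_left hmpos.le, hA, hC]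
      have p2 : ∫ x in Set.Ici m, ((μ (Set.Iic x)).toReal - if x < m then 0 else 1) ^ 2 = D := by
        rw [hD, ← integral_Ici_eq_integral_Ioi]
        apply setIntegral_congr_fun measurableSet_Ici
        intro x hx; simp only [hF, if_neg (not_lt.mpr (Set.mem_Ici.mp hx))]; ring
      rw [p1, p2]
    · have i123 : IntegrableOn (fun x => 1 - 2 * g x + g x ^ 2) (Set.Ioo (0:ℝ) m) := i12.add i3
      exact i123.congr_fun heq measurableSet_Ioo
    · refine (hg2_int.mono_set hsub3).congr_fun ?_ measurableSet_Ici
      intro x hx; simp only [hF, if_neg (not_lt.mpr (Set.mem_Ici.mp hx))]; ring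
  rw [e1, e2, e3]
  have hm0 : m ≠ 0 := ne_of_gt hmpos
  field_simp
  nlinarith [hsplit]
end
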